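/- In the non-equivariant quotient Q = ℤ[q][x₁,...,x_k]^{S_k}/⟨h_{n−k+1}, ..., h_{n−1}, h_n + (−1)^k q⟩, the complete homogeneous symmetric polynomials satisfy h_{nd+j} ≡ (−1)^{d(k−1)} q^d h_j for all d ≥ 0 and 0 ≤ j ≤ n−1. -/

import Mathlib

noncomputable section

/-- The ring `ℤ[q][x₁, …, x_k]`. -/
abbrev QPoly (k : ℕ) := MvPolynomial (Fin k) (Polynomial ℤ)

/-- The quantum parameter `q`. -/
def qq (k : ℕ) : QPoly k := MvPolynomial.C Polynomial.X

/-- The complete homogeneous symmetric polynomial `h_m` in `x₁, …, x_k`. -/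
def hcomp (k m : ℕ) : QPoly k :=
  ∑ f ∈ Finset.univ.filter (fun f : Fin m → Fin k => ∀ a b : Fin m, a ≤ b → f a ≤ f b),
    ∏ j : Fin m, MvPolynomial.X (f j)

/-- `hcomp` extended to integer degrees (zero in negative degrees). -/
def hzcomp (k : ℕ) (m : ℤ) : QPoly k := if 0 ≤ m then hcomp k m.toNat else 0

/-- The quantum ideal `⟨h_{n-k+1}, …, h_{n-1}, h_n + (-1)^k q⟩`. -/
def Jq (n k : ℕ) : Ideal (QPoly k) :=
  Ideal.span
    (((hcomp k) '' {m : ℕ | n - k + 1 ≤ m ∧ m ≤ n - 1}) ∪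
      {hcomp k n + (-1 : QPoly k) ^ k * qq k})

/-- The Schur polynomial of `lam` (parts indexed from 1) via the Jacobi–Trudi
formula `s_λ = det (h_{λ_i + j - i})_{1 ≤ i,j ≤ k}`. -/
def schurJT (k : ℕ) (lam : ℕ → ℕ) : QPoly k :=
  Matrix.det (Matrix.of fun i j : Fin k =>
    hzcomp k ((lam ((i : ℕ) + 1) : ℤ) + ((j : ℕ) : ℤ) - ((i : ℕ) : ℤ)))

open Finset MvPolynomial Multiset List in
lemma ofFn_multiset_eq {m k : ℕ} (f : Fin m → Fin k) :
    Multiset.map f (Finset.univ.val : Multiset (Fin m)) = ↑(List.ofFn f) := by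
  rw [Fin.univ_def]
  show Multiset.map f ↑(List.finRange m) = _
  rw [Multiset.map_coe, List.ofFn_eq_map]

open Finset Multiset in
lemma sum_count_univ {k : ℕ} (s : Multiset (Fin k)) :
    ∑ i : Fin k, s.count i = Multiset.card s := by
  rw [← Multiset.toFinset_sum_count_eq s]
  exact (Finset.sum_subset (Finset.subset_univ _) (fun i _ hi =>
    Multiset.count_eq_zero_of_notMem (fun h => hi (Multiset.mem_toFinset.2 h)))).symm

open Finset MvPolynomial Multiset in
lemma prod_map_X {k : ℕ} (s : Multiset (Fin k)) :
    (s.map (MvPolynomial.X : Fin k → QPoly k)).prod = ∏ i : Fin k, (MvPolynomial.X i : QPoly k) ^ s.count i := by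
  rw [Finset.prod_multiset_map_count]
  exact Finset.prod_subset (Finset.subset_univ _) (fun i _ hi => by
    rw [Multiset.count_eq_zero_of_notMem (fun h => hi (Multiset.mem_toFinset.2 h)), pow_zero])

open Finset MvPolynomial in
lemma hcomp_eq_sum (k m : ℕ) :
    hcomp k m = ∑ l ∈ Finset.finsuppAntidiag (Finset.univ : Finset (Fin k)) m,
      ∏ i : Fin k, (MvPolynomial.X i : QPoly k) ^ l i := by
  classical
  rw [hcomp]
  have hlen : ∀ l ∈ Finset.finsuppAntidiag (Finset.univ : Finset (Fin k)) m,
      m = (Multiset.sort (Finsupp.toMultiset l) (· ≤ ·)).length := by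
    intro l hl
    rw [Multiset.length_sort, Finsupp.card_toMultiset]
    rw [Finset.mem_finsuppAntidiag] at hl
    rw [Finsupp.sum_fintype _ _ (fun _ => rfl)]
    exact hl.1.symm
  -- key fact about j
  have hofn : ∀ (l : Fin k →₀ ℕ) (hl : l ∈ Finset.finsuppAntidiag (Finset.univ : Finset (Fin k)) m),
      List.ofFn (fun jj : Fin m => (Multiset.sort (Finsupp.toMultiset l) (· ≤ ·)).get
          (Fin.cast (hlen l hl) jj)) = Multiset.sort (Finsupp.toMultiset l) (· ≤ ·) := by
    intro l hl
    apply List.ext_get (by simp [(hlen l hl).symm])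
    intro i h1 h2
    simp [List.get_ofFn]
  have hmono : ∀ (l : Fin k →₀ ℕ) (hl : l ∈ Finset.finsuppAntidiag (Finset.univ : Finset (Fin k)) m),
      (fun jj : Fin m => (Multiset.sort (Finsupp.toMultiset l) (· ≤ ·)).get
          (Fin.cast (hlen l hl) jj)) ∈ Finset.univ.filter
          (fun f : Fin m → Fin k => ∀ a b : Fin m, a ≤ b → f a ≤ f b) := by
    intro l hl
    refine Finset.mem_filter.2 ⟨Finset.mem_univ _, fun a b hab => ?_⟩
    refine (Multiset.pairwise_sort _ (· ≤ ·)).rel_get_of_le ?_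
    rw [Fin.le_def]
    simpa only [Fin.coe_cast] using Fin.le_def.1 hab
  have hif : ∀ f ∈ Finset.univ.filter
      (fun f : Fin m → Fin k => ∀ a b : Fin m, a ≤ b → f a ≤ f b),
      (Multiset.map f Finset.univ.val).toFinsupp
        ∈ Finset.finsuppAntidiag (Finset.univ : Finset (Fin k)) m := by
    intro f hf
    rw [Finset.mem_finsuppAntidiag]
    refine ⟨?_, Finset.subset_univ _⟩
    have : ∀ i : Fin k, (Multiset.map f Finset.univ.val).toFinsupp i
        = (Multiset.map f Finset.univ.val).count i := fun i => rfl
    rw [Finset.sum_congr rfl (fun i _ => this i), sum_count_univ]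
    simp
  refine Finset.sum_bij'
    (i := fun f _ => (Multiset.map f Finset.univ.val).toFinsupp)
    (j := fun l hl jj => (Multiset.sort (Finsupp.toMultiset l) (· ≤ ·)).get
        (Fin.cast (hlen l hl) jj))
    hif hmono ?_ ?_ ?_
  · -- left_inv : j (i f) = f
    intro f hf
    apply List.ofFn_injective
    have hm : Finsupp.toMultiset ((Multiset.map f Finset.univ.val).toFinsupp)
        = ↑(List.ofFn f) := by
      rw [Multiset.toFinsupp_toMultiset, ofFn_multiset_eq]
    have hsorted : (List.ofFn f).Pairwise (· ≤ ·) := by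
      rw [List.pairwise_ofFn]
      intro a b hab
      exact (Finset.mem_filter.1 hf).2 a b hab.le
    have hsort_eq : Multiset.sort
        (Finsupp.toMultiset ((Multiset.map f Finset.univ.val).toFinsupp)) (· ≤ ·) = List.ofFn f := by
      rw [hm]
      refine List.Perm.eq_of_pairwise' (Multiset.pairwise_sort _ _) hsorted ?_
      rw [← Multiset.coe_eq_coe, Multiset.sort_eq]
    exact (hofn _ (hif f hf)).trans hsort_eq
  · -- right_inv
    intro l hl
    calc (Multiset.map _ Finset.univ.val).toFinsupp
        = (↑(List.ofFn (fun jj : Fin m => (Multiset.sort (Finsupp.toMultiset l) (· ≤ ·)).get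
            (Fin.cast (hlen l hl) jj))) : Multiset (Fin k)).toFinsupp := by
          rw [ofFn_multiset_eq]
      _ = (Finsupp.toMultiset l).toFinsupp := by rw [hofn l hl, Multiset.sort_eq]
      _ = l := Finsupp.toMultiset_toFinsupp l
  · -- values
    intro f hf
    have h1 : ∏ j : Fin m, (MvPolynomial.X (f j) : QPoly k)
        = ((Multiset.map f Finset.univ.val).map (MvPolynomial.X : Fin k → QPoly k)).prod := by
      rw [ofFn_multiset_eq, Multiset.map_coe, Multiset.prod_coe, List.map_ofFn,
        List.prod_ofFn]
      rfl
    rw [h1, prod_map_X]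
    rfl

open PowerSeries Finset in
lemma geom_inv {R : Type*} [CommRing R] (a : R) :
    (1 - PowerSeries.C a * PowerSeries.X) * PowerSeries.mk (fun n => a ^ n) = 1 := by
  ext n
  cases n with
  | zero => simp
  | succ n =>
    rw [sub_mul, one_mul, map_sub, mul_assoc, PowerSeries.coeff_C_mul,
      PowerSeries.coeff_succ_X_mul, PowerSeries.coeff_mk, PowerSeries.coeff_mk,
      PowerSeries.coeff_one]
    simp [pow_succ, mul_comm]

def Gp (k : ℕ) : Polynomial (QPoly k) :=
  ∏ i : Fin k, (1 - Polynomial.C (MvPolynomial.X i) * Polynomial.X)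

lemma Gp_natDegree_le (k : ℕ) : (Gp k).natDegree ≤ k := by
  refine le_trans (Polynomial.natDegree_prod_le _ _) ?_
  have : ∀ i : Fin k, (1 - Polynomial.C (MvPolynomial.X i : QPoly k) * Polynomial.X).natDegree ≤ 1 := by
    intro i
    refine le_trans (Polynomial.natDegree_sub_le _ _) ?_
    simp [Polynomial.natDegree_C_mul_X]
  refine le_trans (Finset.sum_le_sum (g := fun _ => 1) (fun i _ => this i)) ?_
  simp

lemma Gp_coeff_zero (k : ℕ) : (Gp k).coeff 0 = 1 := by
  rw [Polynomial.coeff_zero_eq_eval_zero]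
  simp [Gp, Polynomial.eval_prod]

lemma mk_hcomp_eq_prod (k : ℕ) :
    PowerSeries.mk (hcomp k)
      = ∏ i : Fin k, PowerSeries.mk (fun n => (MvPolynomial.X i : QPoly k) ^ n) := by
  apply PowerSeries.ext
  intro m
  rw [PowerSeries.coeff_mk, hcomp_eq_sum]
  refine Eq.trans ?_ (PowerSeries.coeff_prod
    (fun i : Fin k => PowerSeries.mk (fun n => (MvPolynomial.X i : QPoly k) ^ n))
    m Finset.univ).symm
  refine Finset.sum_congr rfl (fun l _ => Finset.prod_congr rfl (fun i _ => ?_))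
  rw [PowerSeries.coeff_mk]

lemma Gp_mul_H (k : ℕ) :
    (↑(Gp k) : PowerSeries (QPoly k)) * PowerSeries.mk (hcomp k) = 1 := by
  have hcoe : (↑(Gp k) : PowerSeries (QPoly k))
      = ∏ i : Fin k, (1 - PowerSeries.C (MvPolynomial.X i : QPoly k) * PowerSeries.X) := by
    rw [Gp, ← Polynomial.coeToPowerSeries.ringHom_apply, map_prod]
    refine Finset.prod_congr rfl (fun i _ => ?_)
    simp [Polynomial.coeToPowerSeries.ringHom_apply, Polynomial.coe_sub, Polynomial.coe_mul,
      Polynomial.coe_C, Polynomial.coe_X]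
  rw [hcoe, mk_hcomp_eq_prod, ← Finset.prod_mul_distrib]
  rw [Finset.prod_congr rfl (fun i _ => geom_inv (MvPolynomial.X i : QPoly k))]
  simp

lemma hcomp_zero (k : ℕ) : hcomp k 0 = 1 := by
  rw [hcomp]
  rw [Finset.filter_true_of_mem (fun f _ => fun a => a.elim0)]
  simp

lemma hzcomp_natCast (k a : ℕ) : hzcomp k (a : ℤ) = hcomp k a := by
  rw [hzcomp, if_pos (by omega : (0:ℤ) ≤ (a:ℤ)), Int.toNat_natCast]

lemma hcomp_rec (k s : ℕ) (hs : 1 ≤ s) :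
    hcomp k s
      = -∑ r ∈ Finset.range k, (Gp k).coeff (r + 1) * hzcomp k ((s : ℤ) - (r + 1)) := by
  have h0 : PowerSeries.coeff s
      ((↑(Gp k) : PowerSeries (QPoly k)) * PowerSeries.mk (hcomp k)) = 0 := by
    rw [Gp_mul_H, PowerSeries.coeff_one, if_neg (by omega)]
  rw [PowerSeries.coeff_mul, Finset.Nat.sum_antidiagonal_eq_sum_range_succ_mk,
    Finset.sum_range_succ'] at h0
  simp only [Polynomial.coeff_coe, PowerSeries.coeff_mk] at h0
  rw [Gp_coeff_zero, Nat.sub_zero, one_mul] at h0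
  have key : ∑ r ∈ Finset.range s, (Gp k).coeff (r + 1) * hcomp k (s - (r + 1))
      = ∑ r ∈ Finset.range k, (Gp k).coeff (r + 1) * hzcomp k ((s : ℤ) - (r + 1)) := by
    have e1 : ∑ r ∈ Finset.range s, (Gp k).coeff (r + 1) * hcomp k (s - (r + 1))
        = ∑ r ∈ Finset.range s, (Gp k).coeff (r + 1) * hzcomp k ((s : ℤ) - (r + 1)) := by
      refine Finset.sum_congr rfl (fun r hr => ?_)
      rw [Finset.mem_range] at hr
      rw [hzcomp, if_pos (by omega)]
      congr 2
      omega
    have e2 : ∑ r ∈ Finset.range s, (Gp k).coeff (r + 1) * hzcomp k ((s : ℤ) - (r + 1))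
        = ∑ r ∈ Finset.range (s + k), (Gp k).coeff (r + 1) * hzcomp k ((s : ℤ) - (r + 1)) := by
      refine Finset.sum_subset (Finset.range_subset_range.2 (by omega)) (fun r _ hr => ?_)
      rw [Finset.mem_range, not_lt] at hr
      rw [hzcomp, if_neg (by omega), mul_zero]
    have e3 : ∑ r ∈ Finset.range k, (Gp k).coeff (r + 1) * hzcomp k ((s : ℤ) - (r + 1))
        = ∑ r ∈ Finset.range (s + k), (Gp k).coeff (r + 1) * hzcomp k ((s : ℤ) - (r + 1)) := by
      refine Finset.sum_subset (Finset.range_subset_range.2 (by omega)) (fun r _ hr => ?_)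
      rw [Finset.mem_range, not_lt] at hr
      rw [Polynomial.coeff_eq_zero_of_natDegree_lt (lt_of_le_of_lt (Gp_natDegree_le k) (by omega) : (Gp k).natDegree < r + 1),
        zero_mul]
    rw [e1, e2, ← e3]
  rw [key] at h0
  linear_combination h0

lemma key (n k : ℕ) (hn : 0 < n) (hk : k ≤ n) :
    ∀ m : ℕ, hcomp k (n + m) - (-1 : QPoly k) ^ (k - 1) * qq k * hcomp k m ∈ Jq n k := by
  intro m
  induction m using Nat.strong_induction_on with
  | _ m IH =>
  have hgen : hcomp k n + (-1 : QPoly k) ^ k * qq k ∈ Jq n k :=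
    Ideal.subset_span (Set.mem_union_right _ rfl)
  rcases Nat.eq_zero_or_pos m with hm0 | hm1
  · -- base case m = 0
    subst hm0
    rw [Nat.add_zero, hcomp_zero, mul_one]
    rcases Nat.eq_zero_or_pos k with hk0 | hk1
    · subst hk0
      have h0 : hcomp 0 n = 0 := by
        rw [hcomp_rec 0 n hn]
        simp
      rw [h0]
      have : (0 : QPoly 0) - (-1) ^ (0 - 1) * qq 0 = -(hcomp 0 n + (-1) ^ 0 * qq 0) := by
        rw [h0]; ring_nf
      rw [this]
      exact (Jq n 0).neg_mem hgen
    · obtain ⟨k', rfl⟩ : ∃ k', k = k' + 1 := ⟨k - 1, by omega⟩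
      have : hcomp (k' + 1) n - (-1 : QPoly (k' + 1)) ^ (k' + 1 - 1) * qq (k' + 1)
          = hcomp (k' + 1) n + (-1 : QPoly (k' + 1)) ^ (k' + 1) * qq (k' + 1) := by
        simp only [Nat.add_sub_cancel, pow_succ]
        ring
      rw [this]
      exact hgen
  · -- inductive step m ≥ 1
    have tmem : ∀ r ∈ Finset.range k,
        hzcomp k (((n + m : ℕ) : ℤ) - (r + 1))
          - (-1 : QPoly k) ^ (k - 1) * qq k * hzcomp k ((m : ℤ) - (r + 1)) ∈ Jq n k := by
      intro r hr
      rw [Finset.mem_range] at hr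
      rcases le_or_gt (r + 1) m with hle | hgt
      · have e1 : ((n + m : ℕ) : ℤ) - (r + 1) = ((n + (m - (r + 1)) : ℕ) : ℤ) := by omega
        have e2 : ((m : ℕ) : ℤ) - (r + 1) = ((m - (r + 1) : ℕ) : ℤ) := by omega
        rw [e1, e2, hzcomp_natCast, hzcomp_natCast]
        exact IH (m - (r + 1)) (by omega)
      · have e1 : ((n + m : ℕ) : ℤ) - (r + 1) = ((n + m - (r + 1) : ℕ) : ℤ) := by omega
        have e2 : hzcomp k ((m : ℤ) - (r + 1)) = 0 := by
          rw [hzcomp, if_neg (by omega)]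
        rw [e1, e2, hzcomp_natCast, mul_zero, sub_zero]
        refine Ideal.subset_span (Set.mem_union_left _ ⟨n + m - (r + 1), ⟨?_, ?_⟩, rfl⟩)
        · omega
        · omega
    have hsum : ∑ r ∈ Finset.range k, (Gp k).coeff (r + 1)
        * (hzcomp k (((n + m : ℕ) : ℤ) - (r + 1))
          - (-1 : QPoly k) ^ (k - 1) * qq k * hzcomp k ((m : ℤ) - (r + 1))) ∈ Jq n k :=
      Ideal.sum_mem _ (fun r hr => Ideal.mul_mem_left _ _ (tmem r hr))
    have hneg := (Jq n k).neg_mem hsum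
    rw [hcomp_rec k (n + m) (by omega), hcomp_rec k m (by omega)]
    convert hneg using 1
    have : ∀ r ∈ Finset.range k, (Gp k).coeff (r + 1)
        * (hzcomp k (((n + m : ℕ) : ℤ) - (r + 1))
          - (-1 : QPoly k) ^ (k - 1) * qq k * hzcomp k ((m : ℤ) - (r + 1)))
        = (Gp k).coeff (r + 1) * hzcomp k (((n + m : ℕ) : ℤ) - (r + 1))
          - (-1 : QPoly k) ^ (k - 1) * qq k
            * ((Gp k).coeff (r + 1) * hzcomp k ((m : ℤ) - (r + 1))) := fun r _ => by ring
    rw [Finset.sum_congr rfl this, Finset.sum_sub_distrib, ← Finset.mul_sum]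
    ring

theorem hcomp_high_degree_reduction (n k : ℕ) (hn : 0 < n) (hk : k ≤ n) :
    ∀ d : ℕ, ∀ j : ℕ, j ≤ n - 1 →
      hcomp k (n * d + j) -
        (-1 : QPoly k) ^ (d * (k - 1)) * (qq k) ^ d * hcomp k j ∈ Jq n k := by
  intro d
  induction d with
  | zero =>
    intro j _
    have : hcomp k (n * 0 + j) - (-1 : QPoly k) ^ (0 * (k - 1)) * qq k ^ 0 * hcomp k j
        = 0 := by
      rw [Nat.mul_zero, Nat.zero_add, Nat.zero_mul, pow_zero, pow_zero]
      ring
    rw [this]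
    exact (Jq n k).zero_mem
  | succ d IHd =>
    intro j hj
    have h1 := key n k hn hk (n * d + j)
    have h2 := (Jq n k).mul_mem_left ((-1 : QPoly k) ^ (k - 1) * qq k) (IHd j hj)
    have h3 := (Jq n k).add_mem h1 h2
    have heq : hcomp k (n * (d + 1) + j)
        - (-1 : QPoly k) ^ ((d + 1) * (k - 1)) * qq k ^ (d + 1) * hcomp k j
        = (hcomp k (n + (n * d + j))
            - (-1 : QPoly k) ^ (k - 1) * qq k * hcomp k (n * d + j))
          + (-1 : QPoly k) ^ (k - 1) * qq k
            * (hcomp k (n * d + j)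
              - (-1 : QPoly k) ^ (d * (k - 1)) * qq k ^ d * hcomp k j) := by
      have e1 : n * (d + 1) + j = n + (n * d + j) := by ring
      have e2 : (d + 1) * (k - 1) = (k - 1) + d * (k - 1) := by ring
      rw [e1, e2, pow_add, pow_succ]
      ring
    rw [heq]
    exact h3
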